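/- Let l ≤ 2 and let G be a (2,l)-tight graph embedded in a surface Σ. If H is a subgraph of G and F is a face of H, then γ(H ∪ int_G(F)) ≤ γ(H), where int_G(F) is the subgraph of G consisting of all vertices and edges lying in the closure of F. -/
import Mathlib


/-- A finite multigraph: each edge is incident to an unordered pair of vertices
(loops and parallel edges allowed). -/
structure MGraph (V E : Type) where
  inc : E → Sym2 V

namespace MGraph

variable {V E : Type} [DecidableEq V] [DecidableEq E]

/-- A subgraph of a multigraph: a set of vertices and a set of edges whose
endpoints all lie in the vertex set. -/
structure Sub (G : MGraph V E) where
  verts : Finset V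
  edges : Finset E
  compat : ∀ e ∈ edges, ∀ v ∈ G.inc e, v ∈ verts

variable {G : MGraph V E}

/-- γ(H) = 2|V(H)| - |E(H)|. -/
def Sub.gamma (H : G.Sub) : ℤ := 2 * H.verts.card - H.edges.card

def Sub.union (H K : G.Sub) : G.Sub where
  verts := H.verts ∪ K.verts
  edges := H.edges ∪ K.edges
  compat := by
    intro e he v hv
    rcases Finset.mem_union.1 he with h | h
    · exact Finset.mem_union.2 (Or.inl (H.compat e h v hv))
    · exact Finset.mem_union.2 (Or.inr (K.compat e h v hv))

def Sub.inter (H K : G.Sub) : G.Sub where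
  verts := H.verts ∩ K.verts
  edges := H.edges ∩ K.edges
  compat := by
    intro e he v hv
    rcases Finset.mem_inter.1 he with ⟨h1, h2⟩
    exact Finset.mem_inter.2 ⟨H.compat e h1 v hv, K.compat e h2 v hv⟩

/-- Subgraph containment. -/
def Sub.le (H K : G.Sub) : Prop := H.verts ⊆ K.verts ∧ H.edges ⊆ K.edges

/-- H is (2,l)-sparse: every nonempty subgraph K of H has γ(K) ≥ l. -/
def Sparse (l : ℤ) (H : G.Sub) : Prop :=
  ∀ K : G.Sub, K.le H → K.verts.Nonempty → l ≤ K.gamma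

/-- H is (2,l)-tight: (2,l)-sparse and γ(H) = l. -/
def Tight (l : ℤ) (H : G.Sub) : Prop := Sparse l H ∧ H.gamma = l

/-- The whole graph, as a subgraph of itself. -/
def top (G : MGraph V E) [Fintype V] [Fintype E] : G.Sub where
  verts := Finset.univ
  edges := Finset.univ
  compat := fun _ _ v _ => Finset.mem_univ v

/-- Adjacency within a subgraph. -/
def Sub.Adj (H : G.Sub) (u w : V) : Prop := ∃ e ∈ H.edges, G.inc e = s(u, w)

/-- A subgraph is connected if any two of its vertices are joined by a walk in it. -/
def Sub.Connected (H : G.Sub) : Prop :=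
  ∀ u ∈ H.verts, ∀ w ∈ H.verts, Relation.ReflTransGen H.Adj u w

/-- The graph obtained from `G` by identifying the vertex `b` with the vertex `a`
and deleting the two edges `f` and `g`. -/
def contractDel (G : MGraph V E) (a b : V) (hab : a ≠ b) (f g : E) :
    MGraph {v : V // v ≠ b} {e : E // e ≠ f ∧ e ≠ g} where
  inc e := (G.inc e.1).map fun v => if hv : v = b then ⟨a, hab⟩ else ⟨v, hv⟩

/-- Add a single new edge joining `u` and `v`. -/
def addEdge (G : MGraph V E) (u v : V) : MGraph V (Option E) where
  inc := fun e? => e?.elim s(u, v) G.inc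

end MGraph

/-- hole filling: `G` is a (2,l)-tight surface graph (l ≤ 2), `H` a
subgraph, `F` a face of `H` with interior subgraph `I = int_G(F)` and exterior
subgraph `X = ext_G(F)`; these satisfy `G = I ∪ X`, `H ∩ I = X ∩ I` and `X` is
nonempty.  Then γ(H ∪ int_G(F)) ≤ γ(H). -/

lemma gamma_ie {V E : Type} [DecidableEq V] [DecidableEq E] {G : MGraph V E}
    (A B : G.Sub) :
    (A.union B).gamma + (A.inter B).gamma = A.gamma + B.gamma := by
  have hv : ((A.verts ∪ B.verts).card : ℤ) + (A.verts ∩ B.verts).card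
      = A.verts.card + B.verts.card := by
    exact_mod_cast Finset.card_union_add_card_inter A.verts B.verts
  have he : ((A.edges ∪ B.edges).card : ℤ) + (A.edges ∩ B.edges).card
      = A.edges.card + B.edges.card := by
    exact_mod_cast Finset.card_union_add_card_inter A.edges B.edges
  simp only [MGraph.Sub.gamma, MGraph.Sub.union, MGraph.Sub.inter]
  linarith

theorem hole_filling {V E : Type} [DecidableEq V] [DecidableEq E]
    [Fintype V] [Fintype E] (G : MGraph V E) (l : ℤ) (hl : l ≤ 2)
    (hsp : MGraph.Sparse l (MGraph.top G))
    (ht : (MGraph.top G).gamma = l)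
    (H I X : G.Sub)
    (hcover : I.union X = MGraph.top G)
    (hHI : H.inter I = X.inter I)
    (hXne : X.verts.Nonempty) :
    (H.union I).gamma ≤ H.gamma := by
  have h1 := gamma_ie H I
  have h2 := gamma_ie I X
  rw [hcover, ht] at h2
  have hX : l ≤ X.gamma := hsp X ⟨Finset.subset_univ _, Finset.subset_univ _⟩ hXne
  have hc : (H.inter I).gamma = (I.inter X).gamma := by
    rw [hHI]
    simp [MGraph.Sub.gamma, MGraph.Sub.inter, Finset.inter_comm]
  linarith
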